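/- There exists an n-component Boolean network f with acyclic asynchronous graph such that every word fixing f has length at least 2^n - 1; combined with the upper bound, the maximum fixing length over all asynchronous-acyclic n-component networks equals 2^n - 1. -/

import Mathlib

/-- One asynchronous update step: replace coordinate `i` of `x` by `f x i`. -/
def updateStep {n : ℕ} (f : (Fin n → Bool) → (Fin n → Bool)) (x : Fin n → Bool)
    (i : Fin n) : Fin n → Bool :=
  Function.update x i (f x i)

/-- Action of a word on a state. -/
def applyWord {n : ℕ} (f : (Fin n → Bool) → (Fin n → Bool)) :
    List (Fin n) → (Fin n → Bool) → (Fin n → Bool)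
  | [], x => x
  | i :: w, x => applyWord f w (updateStep f x i)

/-- A word `w` fixes `f` if applying it to any state yields a fixed point of `f`. -/
def Fixes {n : ℕ} (f : (Fin n → Bool) → (Fin n → Bool)) (w : List (Fin n)) : Prop :=
  ∀ x, f (applyWord f w x) = applyWord f w x

/-- Arc of the asynchronous graph. -/
def AsyncArc {n : ℕ} (f : (Fin n → Bool) → (Fin n → Bool))
    (x y : Fin n → Bool) : Prop :=
  ∃ i : Fin n, f x i ≠ x i ∧ y = Function.update x i (f x i)

/-- `w` is induced by a path of the `n`-cube. -/
def IsPathWord (n : ℕ) (w : List (Fin n)) : Prop :=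
  ∃ xs : List (Fin n → Bool), xs.Nodup ∧ xs.length = w.length + 1 ∧
    ∀ k (hk : k < w.length),
      xs.getD (k + 1) default =
        Function.update (xs.getD k default) (w.get ⟨k, hk⟩)
          (!(xs.getD k default (w.get ⟨k, hk⟩)))

/-- `W` contains every `n`-path-word as a subword. -/
def PathUniversal (n : ℕ) (W : List (Fin n)) : Prop :=
  ∀ w : List (Fin n), IsPathWord n w → w.Sublist W


section Aux

def gray (k : ℕ) : ℕ := k ^^^ (k / 2)

lemma xor_div_two (a b : ℕ) : (a ^^^ b) / 2 = a / 2 ^^^ b / 2 := by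
  apply Nat.eq_of_testBit_eq
  intro i
  simp [Nat.testBit_div_two, Nat.testBit_xor]

lemma gray_div_two (k : ℕ) : gray k / 2 = gray (k / 2) := by
  simp [gray, xor_div_two, Nat.div_div_eq_div_mul]

lemma xor_self_div (a : ℕ) : gray a ^^^ a / 2 = a := by
  simp [gray, xor_cancel_right]

lemma gray_inj : Function.Injective gray := by
  intro a
  induction a using Nat.strong_induction_on with
  | _ a ih =>
    intro b hab
    rcases Nat.eq_zero_or_pos a with ha | ha
    · subst ha
      have hb : gray b = 0 := by rw [← hab]; simp [gray]
      by_contra hne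
      have hb0 : 0 < b := Nat.pos_of_ne_zero fun h => hne h.symm
      have hbb : b = b / 2 := by
        conv_lhs => rw [← xor_self_div b, hb]
        simp
      have := Nat.div_lt_self hb0 one_lt_two
      omega
    · have h2 : gray (a / 2) = gray (b / 2) := by
        rw [← gray_div_two, ← gray_div_two, hab]
      have hd := ih (a / 2) (Nat.div_lt_self ha one_lt_two) h2
      calc a = gray a ^^^ a / 2 := (xor_self_div a).symm
        _ = gray b ^^^ b / 2 := by rw [hab, hd]
        _ = b := xor_self_div b

lemma gray_lt {k n : ℕ} (h : k < 2 ^ n) : gray k < 2 ^ n :=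
  Nat.xor_lt_two_pow h (lt_of_le_of_lt (Nat.div_le_self k 2) h)

lemma even_xor_succ (a : ℕ) : (2 * a) ^^^ (2 * a + 1) = 1 := by
  apply Nat.eq_of_testBit_eq
  intro i
  cases i with
  | zero =>
    have h1 : (2 * a) % 2 = 0 := by omega
    have h2 : (2 * a + 1) % 2 = 1 := by omega
    simp [Nat.testBit_zero, Nat.testBit_xor, h1, h2]
  | succ i =>
    rw [Nat.testBit_xor, Nat.testBit_succ, Nat.testBit_succ, Nat.testBit_succ]
    have h1 : (2 * a) / 2 = a := by omega
    have h2 : (2 * a + 1) / 2 = a := by omega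
    have h3 : (1 : ℕ) / 2 = 0 := by norm_num
    rw [h1, h2, h3]
    simp

lemma two_mul_xor (a b : ℕ) : (2 * a + 1) ^^^ (2 * b) = 2 * (a ^^^ b) + 1 := by
  apply Nat.eq_of_testBit_eq
  intro i
  cases i with
  | zero =>
    have h1 : (2 * a + 1) % 2 = 1 := by omega
    have h2 : (2 * b) % 2 = 0 := by omega
    have h3 : (2 * (a ^^^ b) + 1) % 2 = 1 := by omega
    simp [Nat.testBit_zero, Nat.testBit_xor, h1, h2, h3]
  | succ i =>
    rw [Nat.testBit_xor, Nat.testBit_succ, Nat.testBit_succ, Nat.testBit_succ]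
    have h1 : (2 * a + 1) / 2 = a := by omega
    have h2 : (2 * b) / 2 = b := by omega
    have h3 : (2 * (a ^^^ b) + 1) / 2 = a ^^^ b := by omega
    rw [h1, h2, h3, Nat.testBit_xor]

lemma xor_succ (k : ℕ) : ∃ t, k ^^^ (k + 1) = 2 ^ (t + 1) - 1 := by
  induction k using Nat.strong_induction_on with
  | _ k ih =>
    rcases Nat.even_or_odd k with ⟨m, hm⟩ | ⟨m, hm⟩
    · refine ⟨0, ?_⟩
      have hk : k = 2 * m := by omega
      subst hk
      rw [even_xor_succ]; norm_num
    · obtain ⟨t, ht⟩ := ih m (by omega)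
      refine ⟨t + 1, ?_⟩
      subst hm
      have hk1 : 2 * m + 1 + 1 = 2 * (m + 1) := by omega
      rw [hk1, two_mul_xor, ht]
      have h0 : 0 < (2:ℕ) ^ (t + 1) := pow_pos (by norm_num) _
      have h2 : (2:ℕ) ^ (t + 1 + 1) = 2 * 2 ^ (t + 1) := by
        rw [pow_succ, Nat.mul_comm]
      omega

lemma gray_succ (k : ℕ) : ∃ t, gray (k + 1) = gray k ^^^ 2 ^ t := by
  obtain ⟨t, ht⟩ := xor_succ k
  refine ⟨t, ?_⟩
  have key : gray k ^^^ gray (k + 1) = 2 ^ t := by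
    have h1 : gray k ^^^ gray (k + 1) = gray (k ^^^ (k + 1)) := by
      simp only [gray, xor_div_two]
      apply Nat.eq_of_testBit_eq
      intro i
      simp only [Nat.testBit_xor]
      cases (k.testBit i) <;> cases ((k / 2).testBit i) <;>
        cases ((k + 1).testBit i) <;> cases (((k + 1) / 2).testBit i) <;> rfl
    rw [h1, ht]
    apply Nat.eq_of_testBit_eq
    intro i
    rw [gray, Nat.testBit_xor]
    have hdiv : (2 ^ (t + 1) - 1) / 2 = 2 ^ t - 1 := by
      have h2 : (2:ℕ) ^ (t + 1) = 2 * 2 ^ t := by rw [pow_succ, Nat.mul_comm]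
      have h0 : 0 < (2:ℕ) ^ t := pow_pos (by norm_num) _
      omega
    rw [hdiv, Nat.testBit_two_pow_sub_one, Nat.testBit_two_pow_sub_one,
      Nat.testBit_two_pow]
    rcases lt_trichotomy i t with h | h | h
    · simp [h, show i < t + 1 by omega, show ¬ t = i by omega]
    · subst h; simp
    · simp [show ¬ i < t by omega, show ¬ i < t + 1 by omega, show ¬ t = i by omega]
  calc gray (k + 1) = (gray k ^^^ gray k) ^^^ gray (k + 1) := by simp
    _ = gray k ^^^ (gray k ^^^ gray (k + 1)) := Nat.xor_assoc _ _ _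
    _ = gray k ^^^ 2 ^ t := by rw [key]

/-- The `k`-th state on the Gray-code Hamiltonian path. -/
def sfun (n k : ℕ) : Fin n → Bool := fun i => (gray k).testBit i

lemma sfun_inj {n k j : ℕ} (hk : k < 2 ^ n) (hj : j < 2 ^ n)
    (h : sfun n k = sfun n j) : k = j := by
  apply gray_inj
  apply Nat.eq_of_testBit_eq
  intro i
  by_cases hi : i < n
  · exact congrFun h ⟨i, hi⟩
  · rw [Nat.testBit_lt_two_pow, Nat.testBit_lt_two_pow]
    · exact lt_of_lt_of_le (gray_lt hj) (Nat.pow_le_pow_right (by norm_num) (by omega))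
    · exact lt_of_lt_of_le (gray_lt hk) (Nat.pow_le_pow_right (by norm_num) (by omega))

/-- consecutive states differ in exactly one coordinate -/
lemma sfun_succ {n k : ℕ} (hk : k + 1 < 2 ^ n) :
    ∃ t : Fin n, (∀ i : Fin n, i ≠ t → sfun n (k + 1) i = sfun n k i) ∧
      sfun n (k + 1) t ≠ sfun n k t ∧
      sfun n (k + 1) = Function.update (sfun n k) t (sfun n (k + 1) t) := by
  obtain ⟨t, ht⟩ := gray_succ k
  have h2t : (2 : ℕ) ^ t < 2 ^ n := by
    have h1 : gray k ^^^ gray (k + 1) = 2 ^ t := by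
      rw [ht]
      calc gray k ^^^ (gray k ^^^ 2 ^ t) = (gray k ^^^ gray k) ^^^ 2 ^ t :=
            (Nat.xor_assoc _ _ _).symm
        _ = 2 ^ t := by simp
    rw [← h1]
    exact Nat.xor_lt_two_pow (gray_lt (by omega)) (gray_lt hk)
  have htn : t < n := by
    by_contra h
    exact absurd (Nat.pow_le_pow_right (by norm_num : 1 ≤ 2) (by omega : n ≤ t)) (by omega)
  refine ⟨⟨t, htn⟩, ?_, ?_, ?_⟩
  · intro i hi
    show (gray (k+1)).testBit i = (gray k).testBit i
    rw [ht, Nat.testBit_xor, Nat.testBit_two_pow]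
    have : ¬ (t = (i : ℕ)) := fun h => hi (Fin.ext h.symm)
    simp [this]
  · show (gray (k+1)).testBit t ≠ (gray k).testBit t
    rw [ht, Nat.testBit_xor, Nat.testBit_two_pow]
    simp
  · funext i
    by_cases hi : i = ⟨t, htn⟩
    · subst hi; simp [Function.update_self]
    · rw [Function.update_of_ne hi]
      show (gray (k+1)).testBit i = (gray k).testBit i
      rw [ht, Nat.testBit_xor, Nat.testBit_two_pow]
      have : ¬ (t = (i : ℕ)) := fun h => hi (Fin.ext h.symm)
      simp [this]

open Classical in
/-- The network whose asynchronous graph is exactly the Gray-code path. -/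
noncomputable def pathF (n : ℕ) (x : Fin n → Bool) : Fin n → Bool :=
  if h : ∃ k, k + 1 < 2 ^ n ∧ x = sfun n k then sfun n (Classical.choose h + 1) else x

lemma pathF_sfun {n k : ℕ} (hk : k + 1 < 2 ^ n) : pathF n (sfun n k) = sfun n (k + 1) := by
  have h : ∃ j, j + 1 < 2 ^ n ∧ sfun n k = sfun n j := ⟨k, hk, rfl⟩
  rw [pathF, dif_pos h]
  obtain ⟨hj1, hj2⟩ := Classical.choose_spec h
  have : Classical.choose h = k := (sfun_inj (by omega) (by omega) hj2).symm
  rw [this]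

lemma pathF_last {n : ℕ} : pathF n (sfun n (2 ^ n - 1)) = sfun n (2 ^ n - 1) := by
  rw [pathF, dif_neg]
  rintro ⟨j, hj1, hj2⟩
  have h1 : (1:ℕ) ≤ 2 ^ n := Nat.one_le_two_pow
  have := sfun_inj (by omega) (by omega) hj2
  omega

lemma pathF_off {n : ℕ} {x : Fin n → Bool} (h : ¬ ∃ k, k + 1 < 2 ^ n ∧ x = sfun n k) :
    pathF n x = x := by rw [pathF, dif_neg h]

lemma pathF_arc {n : ℕ} {x y : Fin n → Bool} (h : AsyncArc (pathF n) x y) :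
    ∃ k, k + 1 < 2 ^ n ∧ x = sfun n k ∧ y = sfun n (k + 1) := by
  obtain ⟨i, hne, hy⟩ := h
  by_cases hx : ∃ k, k + 1 < 2 ^ n ∧ x = sfun n k
  · obtain ⟨k, hk, hxk⟩ := hx
    refine ⟨k, hk, hxk, ?_⟩
    subst hxk
    rw [pathF_sfun hk] at hne hy
    obtain ⟨t, hoff, hdiff, hupd⟩ := sfun_succ hk
    have hit : i = t := by
      by_contra hf
      exact hne (hoff i hf)
    subst hit
    rw [hy, hupd]
    simp
  · rw [pathF_off hx] at hne
    exact absurd rfl hne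

lemma pathF_transGen {n : ℕ} {x y : Fin n → Bool}
    (h : Relation.TransGen (AsyncArc (pathF n)) x y) :
    ∃ k j, k < j ∧ j < 2 ^ n ∧ x = sfun n k ∧ y = sfun n j := by
  induction h with
  | single harc =>
    obtain ⟨k, hk, hx, hy⟩ := pathF_arc harc
    exact ⟨k, k + 1, by omega, by omega, hx, hy⟩
  | tail _ harc ih =>
    obtain ⟨k, j, hkj, hj, hx, hy⟩ := ih
    obtain ⟨m, hm, hym, hz⟩ := pathF_arc harc
    have : j = m := sfun_inj hj (by omega) (hy.symm.trans hym)
    exact ⟨k, m + 1, by omega, by omega, hx, hz⟩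

lemma pathF_acyclic {n : ℕ} (x : Fin n → Bool) :
    ¬ Relation.TransGen (AsyncArc (pathF n)) x x := by
  intro h
  obtain ⟨k, j, hkj, hj, hx, hy⟩ := pathF_transGen h
  have := sfun_inj (by omega) hj (hx ▸ hy : sfun n k = sfun n j)
  omega

lemma pathF_word {n : ℕ} (w : List (Fin n)) :
    ∀ k, k < 2 ^ n → ∃ j, j < 2 ^ n ∧
      applyWord (pathF n) w (sfun n k) = sfun n j ∧ j ≤ k + w.length := by
  induction w with
  | nil => intro k hk; exact ⟨k, hk, rfl, by simp⟩
  | cons i w ih =>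
    intro k hk
    by_cases hk1 : k + 1 < 2 ^ n
    · obtain ⟨t, hoff, hdiff, hupd⟩ := sfun_succ hk1
      by_cases hit : i = t
      · subst hit
        have hstep : updateStep (pathF n) (sfun n k) i = sfun n (k + 1) := by
          rw [updateStep, pathF_sfun hk1, ← hupd]
        obtain ⟨j, hj, happ, hle⟩ := ih (k + 1) hk1
        refine ⟨j, hj, ?_, ?_⟩
        · show applyWord (pathF n) w (updateStep (pathF n) (sfun n k) i) = sfun n j
          rw [hstep]; exact happ
        · simp only [List.length_cons]; omega
      · have hstep : updateStep (pathF n) (sfun n k) i = sfun n k := by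
          rw [updateStep, pathF_sfun hk1, hoff i hit, Function.update_eq_self]
        obtain ⟨j, hj, happ, hle⟩ := ih k hk
        refine ⟨j, hj, ?_, ?_⟩
        · show applyWord (pathF n) w (updateStep (pathF n) (sfun n k) i) = sfun n j
          rw [hstep]; exact happ
        · simp only [List.length_cons]; omega
    · have hklast : k = 2 ^ n - 1 := by omega
      have hstep : updateStep (pathF n) (sfun n k) i = sfun n k := by
        rw [updateStep, hklast, pathF_last, Function.update_eq_self]
      obtain ⟨j, hj, happ, hle⟩ := ih k hk
      refine ⟨j, hj, ?_, ?_⟩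
      · show applyWord (pathF n) w (updateStep (pathF n) (sfun n k) i) = sfun n j
        rw [hstep]; exact happ
      · simp only [List.length_cons]; omega

lemma pathF_lower {n : ℕ} (w : List (Fin n)) (hw : Fixes (pathF n) w) :
    2 ^ n - 1 ≤ w.length := by
  have h0 : (0:ℕ) < 2 ^ n := Nat.pow_pos (by norm_num)
  obtain ⟨j, hj, happ, hle⟩ := pathF_word w 0 h0
  have hfix := hw (sfun n 0)
  rw [happ] at hfix
  by_contra hlen
  have hj1 : j + 1 < 2 ^ n := by omega
  rw [pathF_sfun hj1] at hfix
  obtain ⟨t, hoff, hdiff, hupd⟩ := sfun_succ hj1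
  exact hdiff (congrFun hfix t)

lemma transGen_wf {n : ℕ} (f : (Fin n → Bool) → (Fin n → Bool))
    (hacyc : ∀ x, ¬ Relation.TransGen (AsyncArc f) x x) :
    WellFounded (Relation.TransGen (AsyncArc f)) := by
  letI : IsTrans (Fin n → Bool) (Relation.TransGen (AsyncArc f)) :=
    ⟨fun _ _ _ h1 h2 => h1.trans h2⟩
  letI : IsIrrefl (Fin n → Bool) (Relation.TransGen (AsyncArc f)) := ⟨hacyc⟩
  exact Finite.wellFounded_of_trans_of_irrefl _

lemma exists_fixed_point {n : ℕ} (f : (Fin n → Bool) → (Fin n → Bool))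
    (hacyc : ∀ x, ¬ Relation.TransGen (AsyncArc f) x x) :
    ∃ m, f m = m := by
  have hacyc' : ∀ x, ¬ Relation.TransGen (Function.swap (AsyncArc f)) x x := by
    intro x h; exact hacyc x (Relation.transGen_swap.mp h)
  have hwf : WellFounded (Relation.TransGen (Function.swap (AsyncArc f))) := by
    letI : IsTrans (Fin n → Bool) (Relation.TransGen (Function.swap (AsyncArc f))) :=
      ⟨fun _ _ _ h1 h2 => h1.trans h2⟩
    letI : IsIrrefl (Fin n → Bool) (Relation.TransGen (Function.swap (AsyncArc f))) :=
      ⟨hacyc'⟩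
    exact Finite.wellFounded_of_trans_of_irrefl _
  obtain ⟨m, -, hmin⟩ := hwf.has_min Set.univ ⟨default, trivial⟩
  refine ⟨m, ?_⟩
  by_contra hne
  have : ∃ i, f m i ≠ m i := Function.ne_iff.mp hne
  obtain ⟨i, hi⟩ := this
  have harc : AsyncArc f m (Function.update m i (f m i)) := ⟨i, hi, rfl⟩
  exact hmin _ trivial (Relation.TransGen.single harc)

lemma fixing_word_aux {n : ℕ} (f : (Fin n → Bool) → (Fin n → Bool))
    (hacyc : ∀ x, ¬ Relation.TransGen (AsyncArc f) x x) :
    ∀ m (T : Finset (Fin n → Bool)), T.card = m →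
      (∀ x ∈ T, f x ≠ x) →
      (∀ x ∈ T, ∀ z, AsyncArc f x z → f z ≠ z → z ∈ T) →
      ∃ w : List (Fin n), w.length ≤ T.card ∧
        ∀ x, (x ∈ T ∨ f x = x) → f (applyWord f w x) = applyWord f w x := by
  intro m
  induction m using Nat.strong_induction_on with
  | _ m ih =>
    intro T hcard hnf hclosed
    rcases Finset.eq_empty_or_nonempty T with hT | hT
    · subst hT
      refine ⟨[], by simp, fun x hx => ?_⟩
      rcases hx with hx | hx
      · simp at hx
      · exact hx
    · obtain ⟨x₀, hx₀T, hmin⟩ :=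
        (transGen_wf f hacyc).has_min (↑T) (by exact_mod_cast hT)
      obtain ⟨i₀, hi₀⟩ := Function.ne_iff.mp (hnf x₀ hx₀T)
      set T' := T.erase x₀ with hT'
      have hcard' : T'.card = m - 1 := by
        rw [hT', Finset.card_erase_of_mem hx₀T, hcard]
      have hm1 : m - 1 < m := by
        have := Finset.card_pos.mpr hT
        omega
      obtain ⟨w', hw'len, hw'⟩ := ih (m - 1) hm1 T' hcard'
        (fun x hx => hnf x (Finset.mem_of_mem_erase hx))
        (by
          intro x hx z harc hznf
          have hzT : z ∈ T := hclosed x (Finset.mem_of_mem_erase hx) z harc hznf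
          refine Finset.mem_erase.mpr ⟨?_, hzT⟩
          intro hzx₀
          subst hzx₀
          exact hmin x (Finset.mem_of_mem_erase hx) (Relation.TransGen.single harc))
      refine ⟨i₀ :: w', ?_, ?_⟩
      · simp only [List.length_cons]
        rw [hcard']  at hw'len
        omega
      · intro x hx
        show f (applyWord f w' (updateStep f x i₀)) = applyWord f w' (updateStep f x i₀)
        apply hw'
        rcases hx with hxT | hxfix
        · by_cases hfi : f x i₀ = x i₀
          · have hux : updateStep f x i₀ = x := by
              rw [updateStep, hfi, Function.update_eq_self]
            rw [hux]
            left
            refine Finset.mem_erase.mpr ⟨?_, hxT⟩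
            intro hxx₀
            subst hxx₀
            exact hi₀ hfi
          · have harc : AsyncArc f x (updateStep f x i₀) := ⟨i₀, hfi, rfl⟩
            by_cases hzf : f (updateStep f x i₀) = updateStep f x i₀
            · right; exact hzf
            · left
              have hzT : updateStep f x i₀ ∈ T := hclosed x hxT _ harc hzf
              refine Finset.mem_erase.mpr ⟨?_, hzT⟩
              intro hzx₀
              exact hmin x hxT (hzx₀ ▸ Relation.TransGen.single harc)
        · have hux : updateStep f x i₀ = x := by
            rw [updateStep, congrFun hxfix i₀, Function.update_eq_self]
          rw [hux]
          right
          exact hxfix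

lemma fixing_word {n : ℕ} (f : (Fin n → Bool) → (Fin n → Bool))
    (hacyc : ∀ x, ¬ Relation.TransGen (AsyncArc f) x x) :
    ∃ w : List (Fin n), w.length ≤ 2 ^ n - 1 ∧ Fixes f w := by
  classical
  set T : Finset (Fin n → Bool) := Finset.univ.filter (fun x => f x ≠ x) with hT
  obtain ⟨w, hwlen, hw⟩ := fixing_word_aux f hacyc T.card T rfl
    (fun x hx => (Finset.mem_filter.mp hx).2)
    (fun x _ z _ hz => Finset.mem_filter.mpr ⟨Finset.mem_univ z, hz⟩)
  refine ⟨w, ?_, ?_⟩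
  · refine le_trans hwlen ?_
    obtain ⟨mfix, hmfix⟩ := exists_fixed_point f hacyc
    have hsub : T ⊆ Finset.univ.erase mfix := by
      intro x hx
      refine Finset.mem_erase.mpr ⟨?_, Finset.mem_univ x⟩
      intro h
      exact (Finset.mem_filter.mp hx).2 (h ▸ hmfix)
    have hle := Finset.card_le_card hsub
    rw [Finset.card_erase_of_mem (Finset.mem_univ mfix)] at hle
    have hcu : (Finset.univ : Finset (Fin n → Bool)).card = 2 ^ n := by
      simp [Finset.card_univ]
    omega
  · intro x
    exact hw x (by
      by_cases hfx : f x = x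
      · right; exact hfx
      · left; exact Finset.mem_filter.mpr ⟨Finset.mem_univ x, hfx⟩)

end Aux

/-- some asynchronous-acyclic `n`-component network requires fixing words
of length at least `2^n - 1`, and every asynchronous-acyclic network is fixed by some
word of length at most `2^n - 1`; hence the maximum fixing length over the family is
exactly `2^n - 1`. -/
theorem max_fixing_length_acyclic (n : ℕ) (hn : 1 ≤ n) :
    (∃ f : (Fin n → Bool) → (Fin n → Bool),
        (∀ x, ¬ Relation.TransGen (AsyncArc f) x x) ∧
        (∀ w : List (Fin n), Fixes f w → 2 ^ n - 1 ≤ w.length)) ∧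
      (∀ f : (Fin n → Bool) → (Fin n → Bool),
        (∀ x, ¬ Relation.TransGen (AsyncArc f) x x) →
        ∃ w : List (Fin n), w.length ≤ 2 ^ n - 1 ∧ Fixes f w) := by
  constructor
  · exact ⟨pathF n, pathF_acyclic, fun w hw => pathF_lower w hw⟩
  · intro f hacyc
    exact fixing_word f hacyc
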